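/- Fix α > 0 and let R(x) = ((e^x - 1)/e^x)·log(α/(e^x - 1)). Then R is concave on the interval [0, log(1+α)]; more precisely R''(x) = 1/(1-e^x) - e^(-x)·log(α/(e^x-1)) < 0 for x ∈ (0, log(1+α)]. -/

import Mathlib

open Real Filter Set Topology

/-- `R(x) = ((e^x-1)/e^x) log(α/(e^x-1))` is concave on `[0, log(1+α)]`; more precisely
`R''(x) = 1/(1-e^x) - e^(-x) log(α/(e^x-1)) < 0` on `(0, log(1+α)]`. -/
theorem stmt10 (α : ℝ) (hα : 0 < α) :
    ConcaveOn ℝ (Set.Icc 0 (Real.log (1 + α)))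
      (fun x => (Real.exp x - 1) / Real.exp x * Real.log (α / (Real.exp x - 1))) ∧
    ∀ x ∈ Set.Ioc 0 (Real.log (1 + α)),
      deriv (deriv (fun x => (Real.exp x - 1) / Real.exp x * Real.log (α / (Real.exp x - 1)))) x
          = 1 / (1 - Real.exp x) - Real.exp (-x) * Real.log (α / (Real.exp x - 1)) ∧
      1 / (1 - Real.exp x) - Real.exp (-x) * Real.log (α / (Real.exp x - 1)) < 0 := by
  set f : ℝ → ℝ := fun x => (Real.exp x - 1) / Real.exp x * Real.log (α / (Real.exp x - 1))
    with hfdef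
  set L := Real.log (1 + α) with hLdef
  have hpos : ∀ x : ℝ, 0 < x → 0 < Real.exp x - 1 := by
    intro x hx
    have : Real.exp 0 < Real.exp x := Real.exp_lt_exp.mpr hx
    simp only [Real.exp_zero] at this
    linarith
  -- f agrees with a nicer expression on positive reals
  have feq : ∀ y : ℝ, 0 < y →
      f y = (1 - Real.exp (-y)) * (Real.log α - Real.log (Real.exp y - 1)) := by
    intro y hy
    have h2 : Real.exp y - 1 ≠ 0 := (hpos y hy).ne'
    rw [hfdef]
    simp only
    rw [Real.log_div hα.ne' h2, Real.exp_neg]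
    field_simp
  -- first derivative
  have key1 : ∀ x : ℝ, 0 < x →
      HasDerivAt f (Real.exp (-x) * Real.log (α / (Real.exp x - 1)) - 1) x := by
    intro x hx
    have h2 : Real.exp x - 1 ≠ 0 := (hpos x hx).ne'
    have d1 : HasDerivAt (fun y : ℝ => 1 - Real.exp (-y)) (Real.exp (-x)) x := by
      have h : HasDerivAt (fun y : ℝ => Real.exp (-y)) (Real.exp (-x) * (-1)) x :=
        (Real.hasDerivAt_exp (-x)).comp x ((hasDerivAt_id x).neg)
      exact ((hasDerivAt_const x (1 : ℝ)).sub h).congr_deriv (by ring)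
    have d2 : HasDerivAt (fun y : ℝ => Real.log α - Real.log (Real.exp y - 1))
        (-(Real.exp x / (Real.exp x - 1))) x := by
      have h : HasDerivAt (fun y : ℝ => Real.log (Real.exp y - 1))
          (Real.exp x / (Real.exp x - 1)) x :=
        ((Real.hasDerivAt_exp x).sub_const 1).log h2
      exact ((hasDerivAt_const x (Real.log α)).sub h).congr_deriv (by ring)
    have dF := d1.mul d2
    have hval : Real.exp (-x) * (Real.log α - Real.log (Real.exp x - 1))
        + (1 - Real.exp (-x)) * -(Real.exp x / (Real.exp x - 1))
        = Real.exp (-x) * Real.log (α / (Real.exp x - 1)) - 1 := by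
      rw [Real.log_div hα.ne' h2, Real.exp_neg]
      field_simp
      ring
    rw [hval] at dF
    refine dF.congr_of_eventuallyEq ?_
    filter_upwards [Ioi_mem_nhds hx] with y hy
    exact feq y hy
  have dfval : ∀ y : ℝ, 0 < y →
      deriv f y = Real.exp (-y) * Real.log (α / (Real.exp y - 1)) - 1 := fun y hy =>
    (key1 y hy).deriv
  -- second derivative
  have key2 : ∀ x : ℝ, 0 < x →
      HasDerivAt (deriv f)
        (1 / (1 - Real.exp x) - Real.exp (-x) * Real.log (α / (Real.exp x - 1))) x := by
    intro x hx
    have h2 : Real.exp x - 1 ≠ 0 := (hpos x hx).ne'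
    have h3 : (1 : ℝ) - Real.exp x ≠ 0 := by
      have := hpos x hx; intro h; linarith
    have dmexp : HasDerivAt (fun y : ℝ => Real.exp (-y)) (Real.exp (-x) * (-1)) x :=
      (Real.hasDerivAt_exp (-x)).comp x ((hasDerivAt_id x).neg)
    have d2 : HasDerivAt (fun y : ℝ => Real.log α - Real.log (Real.exp y - 1))
        (-(Real.exp x / (Real.exp x - 1))) x := by
      have h : HasDerivAt (fun y : ℝ => Real.log (Real.exp y - 1))
          (Real.exp x / (Real.exp x - 1)) x :=
        ((Real.hasDerivAt_exp x).sub_const 1).log h2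
      exact ((hasDerivAt_const x (Real.log α)).sub h).congr_deriv (by ring)
    have dG := (dmexp.mul d2).sub_const 1
    have hval : Real.exp (-x) * (-1) * (Real.log α - Real.log (Real.exp x - 1))
        + Real.exp (-x) * -(Real.exp x / (Real.exp x - 1))
        = 1 / (1 - Real.exp x) - Real.exp (-x) * Real.log (α / (Real.exp x - 1)) := by
      rw [Real.log_div hα.ne' h2, Real.exp_neg]
      field_simp
      ring
    rw [hval] at dG
    refine dG.congr_of_eventuallyEq ?_
    filter_upwards [Ioi_mem_nhds hx] with y hy
    rw [dfval y hy, Real.log_div hα.ne' (hpos y hy).ne']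
    rfl
  -- negativity of second derivative
  have hneg : ∀ x : ℝ, 0 < x → x ≤ L →
      1 / (1 - Real.exp x) - Real.exp (-x) * Real.log (α / (Real.exp x - 1)) < 0 := by
    intro x hx hxL
    have h1 : (0 : ℝ) < Real.exp x - 1 := hpos x hx
    have hx2 : Real.exp x ≤ 1 + α := by
      have := Real.exp_le_exp.mpr hxL
      rwa [Real.exp_log (by linarith : (0 : ℝ) < 1 + α)] at this
    have hlog : 0 ≤ Real.log (α / (Real.exp x - 1)) := by
      apply Real.log_nonneg
      rw [le_div_iff₀ h1]
      linarith
    have hterm : 1 / (1 - Real.exp x) < 0 :=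
      div_neg_of_pos_of_neg one_pos (by linarith)
    nlinarith [Real.exp_pos (-x), mul_nonneg (Real.exp_pos (-x)).le hlog]
  constructor
  · -- concavity
    have hcont : ContinuousOn f (Set.Icc 0 L) := by
      have hg : Continuous fun y : ℝ =>
          (1 - Real.exp (-y)) * Real.log α - ((Real.exp y - 1) * Real.log (Real.exp y - 1))
            * Real.exp (-y) := by
        have h1 : Continuous fun y : ℝ => Real.exp y - 1 :=
          Real.continuous_exp.sub continuous_const
        have hexpneg : Continuous fun y : ℝ => Real.exp (-y) :=
          Real.continuous_exp.comp continuous_neg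
        exact ((continuous_const.sub hexpneg).mul continuous_const).sub
          ((Real.continuous_mul_log.comp h1).mul hexpneg)
      refine (hg.continuousOn).congr ?_
      intro y hy
      rcases eq_or_lt_of_le hy.1 with h0 | h0
      · simp [hfdef, ← h0]
      · rw [feq y h0]
        simp only [Real.exp_neg]
        have h2 : Real.exp y ≠ 0 := (Real.exp_pos y).ne'
        field_simp
    have hint : interior (Set.Icc 0 L) = Set.Ioo 0 L := interior_Icc
    refine concaveOn_of_deriv2_nonpos (convex_Icc 0 L) hcont ?_ ?_ ?_
    · rw [hint]; intro x hx
      exact ((key1 x hx.1).differentiableAt).differentiableWithinAt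
    · rw [hint]; intro x hx
      exact ((key2 x hx.1).differentiableAt).differentiableWithinAt
    · rw [hint]; intro x hx
      have : deriv^[2] f x = deriv (deriv f) x := by
        simp [Function.iterate_succ, Function.iterate_zero]
      rw [this, (key2 x hx.1).deriv]
      exact (hneg x hx.1 hx.2.le).le
  · intro x hx
    exact ⟨(key2 x hx.1).deriv, hneg x hx.1 hx.2⟩
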